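/- arXiv:2209.05908 — 3 statements merged into one kernel-verified Lean document; each statement's English description precedes it below -/
import Mathlib

section
/- For every permutation τ of {1,…,n}, the map φ(τ) : [n] → {0,1}^n given by φ(τ)(k)_i = (0 if k < τ(i), 1 otherwise) is strictly monotone (injective as a monotone map), i.e. the corresponding n-simplex of the n-cube is nondegenerate. -/
/-- The n-simplex phi(tau) of the n-cube associated with a permutation tau of
{1, ..., n} (encoded 0-based as `Equiv.Perm (Fin n)`): its i-th coordinate is the
monotone map `a^{tau(i)} : [n] -> {0,1}`, sending k to 0 iff k < tau(i) (1-based),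
i.e. iff k <= tau(i) (0-based). -/
def phi (n : ℕ) (τ : Equiv.Perm (Fin n)) : Fin (n + 1) → Fin n → Fin 2 :=
  fun k i => if (k : ℕ) ≤ (τ i : ℕ) then 0 else 1

/-- for every permutation tau of {1,...,n}, the map
phi(tau) : [n] -> {0,1}^n (with {0,1}^n ordered coordinatewise) is strictly monotone,
i.e. the corresponding n-simplex of the n-cube is nondegenerate. -/
theorem stmt_2 (n : ℕ) (τ : Equiv.Perm (Fin n)) : StrictMono (phi n τ) := by
  intro k k' hkk'
  have hk : (k : ℕ) < n := lt_of_lt_of_le hkk' (Nat.lt_succ_iff.mp k'.isLt)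
  constructor
  · intro i
    simp only [phi]
    have hn : (k : ℕ) < (k' : ℕ) := hkk'
    split_ifs with h1 h2 h2
    · exact le_refl _
    · exact Fin.zero_le _
    · omega
    · exact le_refl _
  · intro hle
    have := hle (τ.symm ⟨k, hk⟩)
    simp only [phi, Equiv.apply_symm_apply] at this
    rw [if_neg (not_le.mpr (show (k:ℕ) < (k':ℕ) from hkk'))] at this
    simp at this
end

section
/- Let τ ∈ S_n and let 0 < i < n. Set j = τ⁻¹(i) and j' = τ⁻¹(i+1), and let γ be the transposition of j and j'. Then the i-th faces of the n-simplices φ(τ) and φ(τ∘γ) of the n-cube coincide: φ(τ) ∘ ∂_i = φ(τ∘γ) ∘ ∂_i as maps [n−1] → {0,1}^n. -/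
/-- let tau be a permutation of {1,...,n} and 0 < i < n.  Set
j = tau^{-1}(i), j' = tau^{-1}(i+1) (values encoded 0-based as i-1, i), and let gamma
be the transposition of j and j'.  Then the i-th faces of the n-simplices phi(tau) and
phi(tau . gamma) of the n-cube coincide: phi(tau) . d_i = phi(tau gamma) . d_i. -/
theorem stmt_5 (n i : ℕ) (h0 : 0 < i) (hn : i < n) (τ : Equiv.Perm (Fin n)) :
    phi n τ ∘ (⟨i, by omega⟩ : Fin (n + 1)).succAbove
      = phi n (τ * Equiv.swap (τ⁻¹ ⟨i - 1, by omega⟩) (τ⁻¹ ⟨i, by omega⟩))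
        ∘ (⟨i, by omega⟩ : Fin (n + 1)).succAbove := by
  funext k m
  have hv : ((((⟨i, by omega⟩ : Fin (n + 1)).succAbove k) : ℕ)) ≠ i := by
    rw [Fin.succAbove]
    split
    · rename_i h
      simp only [Fin.coe_castSucc]
      simp only [Fin.lt_def, Fin.coe_castSucc] at h
      omega
    · rename_i h
      simp only [Fin.val_succ]
      simp only [Fin.lt_def, Fin.coe_castSucc, not_lt] at h
      omega
  set v := (⟨i, by omega⟩ : Fin (n + 1)).succAbove k with hvdef
  simp only [Function.comp_apply, phi, Equiv.Perm.mul_apply]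
  rcases eq_or_ne m (τ⁻¹ ⟨i - 1, by omega⟩) with hm | hm
  · subst hm
    simp only [Equiv.swap_apply_left, Equiv.Perm.coe_inv, Equiv.apply_symm_apply]
    have hiff : (v : ℕ) ≤ ((⟨i - 1, by omega⟩ : Fin n) : ℕ) ↔ (v : ℕ) ≤ ((⟨i, by omega⟩ : Fin n) : ℕ) := by
      simp only [Fin.val_mk]; omega
    rw [← hvdef]; exact if_congr hiff rfl rfl
  · rcases eq_or_ne m (τ⁻¹ ⟨i, by omega⟩) with hm2 | hm2
    · subst hm2
      simp only [Equiv.swap_apply_right, Equiv.Perm.coe_inv, Equiv.apply_symm_apply]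
      have hiff : (v : ℕ) ≤ ((⟨i - 1, by omega⟩ : Fin n) : ℕ) ↔ (v : ℕ) ≤ ((⟨i, by omega⟩ : Fin n) : ℕ) := by
        simp only [Fin.val_mk]; omega
      rw [← hvdef]; exact if_congr hiff.symm rfl rfl
    · simp only [Equiv.swap_apply_of_ne_of_ne hm hm2]
end

section
/- For every proper subset T ⊊ [n] with {0, n} ⊆ T, the inclusion of the union of faces Λ^n_T = ⋃_{t∈T} d_t Δ^n into Δ^n is an inner anodyne map of simplicial sets. -/
open CategoryTheory GrothendieckTopology Simplicial SSet

universe u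

/-- The generalized horn Lambda^n_T, for a set T of vertices of the standard n-simplex:
the union of the faces d_t Delta^n for t in T, as a subpresheaf of Delta^n.  A simplex
alpha belongs to it iff some t in T is missed by alpha. -/
def genHorn (n : ℕ) (T : Set (Fin (n + 1))) : Subfunctor Δ[n] where
  obj m := {α | ∃ t ∈ T, t ∉ Set.range (stdSimplex.asOrderHom α)}
  map := by
    intro m₁ m₂ f α hα
    obtain ⟨t, ht, ht'⟩ := hα
    refine ⟨t, ht, fun hmem => ht' ?_⟩
    exact Set.range_comp_subset_range _ _ hmem

/-- A map of simplicial sets is inner anodyne iff it has the left lifting property with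
respect to every map having the right lifting property with respect to all inner horn
inclusions (this characterizes the weakly saturated class generated by the inner horn
inclusions). -/
def InnerAnodyne {X Y : SSet.{u}} (f : X ⟶ Y) : Prop :=
  ∀ ⦃S T : SSet.{u}⦄ (p : S ⟶ T),
    (∀ (m : ℕ) (i : Fin (m + 1)), 0 < (i : ℕ) → (i : ℕ) < m →
      HasLiftingProperty (Λ[m, i].ι) p) →
    HasLiftingProperty f p

namespace Stmt12Aux

open SimplexCategory
open stdSimplex

lemma genHorn_mono {n : ℕ} {T T' : Set (Fin (n + 1))} (h : T ⊆ T') :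
    genHorn.{u} n T ≤ genHorn n T' := by
  rintro M α ⟨t, ht, ht'⟩
  exact ⟨t, h ht, ht'⟩

/-- The generalized horn at the complement of a single vertex is the ordinary horn. -/
def isoHorn (n : ℕ) (i : Fin (n + 1)) : (genHorn.{u} n {i}ᶜ).toFunctor ≅ (Λ[n, i] : SSet.{u}) :=
  NatIso.ofComponents
    (fun M => Equiv.toIso
      { toFun := fun α => ⟨α.1, by
          obtain ⟨t, ht, ht'⟩ := α.2
          intro h
          rcases (h ▸ Set.mem_univ t : t ∈ Set.range (asOrderHom α.1) ∪ {i}) with h' | h'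
          · exact ht' h'
          · exact ht h'⟩
        invFun := fun α => ⟨α.1, by
          obtain ⟨t, ht⟩ := (Set.ne_univ_iff_exists_notMem _).1 α.2
          simp only [Set.mem_union, Set.mem_singleton_iff, not_or] at ht
          exact ⟨t, ht.2, ht.1⟩⟩
        left_inv := fun _ => rfl
        right_inv := fun _ => rfl })
    (fun f => rfl)

lemma isoHorn_hom_ι (n : ℕ) (i : Fin (n + 1)) :
    (isoHorn.{u} n i).hom ≫ Λ[n, i].ι = (genHorn n {i}ᶜ).ι := rfl

lemma horn_case {n : ℕ} (i : Fin (n + 1))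
    {S X : SSet.{u}} (p : S ⟶ X)
    (hp : HasLiftingProperty (Λ[n, i].ι) p) :
    HasLiftingProperty (genHorn n {i}ᶜ).ι p := by
  haveI := hp
  rw [← isoHorn_hom_ι]
  infer_instance

/-- Factor a simplex missing the vertex `i` through the `i`-th face. -/
noncomputable def factorSimplex {m : ℕ} {M : SimplexCategoryᵒᵖ} (α : Δ[m + 1].obj M)
    (i : Fin (m + 2)) : Δ[m].obj M :=
  ULift.up (factor_δ (show (⦋M.unop.len⦌ : SimplexCategory) ⟶ ⦋m + 1⦌ from α.down) i)

lemma factorSimplex_spec {m : ℕ} {M : SimplexCategoryᵒᵖ} (α : Δ[m + 1].obj M) (i : Fin (m + 2))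
    (h : i ∉ Set.range (asOrderHom α)) :
    (SSet.stdSimplex.map (δ i)).app M (factorSimplex α i) = α := by
  apply ULift.ext
  exact factor_δ_spec _ i (fun k hk => h ⟨k, hk⟩)

lemma asOrderHom_face {m : ℕ} (i : Fin (m + 2)) {M : SimplexCategoryᵒᵖ} (β : Δ[m].obj M)
    (j : Fin (M.unop.len + 1)) :
    asOrderHom ((SSet.stdSimplex.map (δ i)).app M β) j = i.succAbove (asOrderHom β j) := rfl

lemma factorSimplex_spec' {m : ℕ} {M : SimplexCategoryᵒᵖ} (α : Δ[m + 1].obj M) (i : Fin (m + 2))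
    (h : i ∉ Set.range (asOrderHom α)) (j : Fin (M.unop.len + 1)) :
    i.succAbove (asOrderHom (factorSimplex α i) j) = asOrderHom α j := by
  conv_rhs => rw [← factorSimplex_spec α i h]
  rfl

lemma asOrderHom_map {m : ℕ} {M₁ M₂ : SimplexCategoryᵒᵖ} (g : M₁ ⟶ M₂) (α : Δ[m].obj M₁)
    (j : Fin (M₂.unop.len + 1)) :
    asOrderHom (Δ[m].map g α) j = asOrderHom α (g.unop.toOrderHom j) := rfl

lemma range_map_le {m : ℕ} {M₁ M₂ : SimplexCategoryᵒᵖ} (g : M₁ ⟶ M₂) (α : Δ[m].obj M₁) :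
    Set.range (asOrderHom (Δ[m].map g α)) ⊆ Set.range (asOrderHom α) := by
  rintro x ⟨j, hj⟩
  exact ⟨g.unop.toOrderHom j, hj⟩

lemma factorSimplex_map {m : ℕ} {M₁ M₂ : SimplexCategoryᵒᵖ} (g : M₁ ⟶ M₂)
    (α : Δ[m + 1].obj M₁) (i : Fin (m + 2)) (h : i ∉ Set.range (asOrderHom α)) :
    factorSimplex (Δ[m + 1].map g α) i = Δ[m].map g (factorSimplex α i) := by
  have h2 : i ∉ Set.range (asOrderHom (Δ[m + 1].map g α)) :=
    fun hx => h (range_map_le g α hx)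
  have e1 := factorSimplex_spec (Δ[m + 1].map g α) i h2
  have e2 := factorSimplex_spec α i h
  apply ULift.ext
  rw [← cancel_mono (δ i)]
  have e1' := congrArg ULift.down e1
  have e2' := congrArg ULift.down e2
  refine e1'.trans ?_
  show g.unop ≫ α.down = _
  rw [← e2']
  rfl

/-- The map from the face horn into the generalized horn. -/
def ψmap {m : ℕ} (i : Fin (m + 2)) (T : Set (Fin (m + 2))) :
    (genHorn.{u} m (i.succAbove ⁻¹' T)).toFunctor ⟶ (genHorn (m + 1) T).toFunctor where
  app M := ↾fun β => ⟨(SSet.stdSimplex.map (δ i)).app M β.1, by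
    obtain ⟨s, hs, hs'⟩ := β.2
    refine ⟨i.succAbove s, hs, ?_⟩
    rintro ⟨j, hj⟩
    exact hs' ⟨j, Fin.succAbove_right_injective (p := i) hj⟩⟩
  naturality M₁ M₂ g := by
    ext β
    exact Subtype.ext (by have := NatTrans.naturality_apply (SSet.stdSimplex.map (δ i)) g β.1; exact this)

/-- The map from the whole (n-1)-simplex into the bigger generalized horn. -/
def φmap {m : ℕ} (i : Fin (m + 2)) (T' : Set (Fin (m + 2))) (hi : i ∈ T') :
    Δ[m] ⟶ (genHorn.{u} (m + 1) T').toFunctor where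
  app M := ↾fun β => ⟨(SSet.stdSimplex.map (δ i)).app M β, ⟨i, hi, by
    rintro ⟨j, hj⟩
    exact Fin.succAbove_ne i _ hj⟩⟩
  naturality M₁ M₂ g := by
    ext β
    exact Subtype.ext (by have := NatTrans.naturality_apply (SSet.stdSimplex.map (δ i)) g β; exact this)

lemma step {m : ℕ} (i : Fin (m + 2)) (T : Set (Fin (m + 2))) (hiT : i ∉ T)
    {S X : SSet.{u}} (p : S ⟶ X)
    (hlift : HasLiftingProperty (genHorn m (i.succAbove ⁻¹' T)).ι p) :
    HasLiftingProperty (Subfunctor.homOfLe (genHorn_mono (Set.subset_insert i T))) p := by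
  constructor
  intro f g sq
  have e : (genHorn m (i.succAbove ⁻¹' T)).ι ≫ φmap i (insert i T) (Set.mem_insert i T)
      = ψmap i T ≫ Subfunctor.homOfLe (genHorn_mono (Set.subset_insert i T)) := by
    ext M β
    rfl
  have sq0 : CommSq (ψmap i T ≫ f) (genHorn m (i.succAbove ⁻¹' T)).ι p
      (φmap i (insert i T) (Set.mem_insert i T) ≫ g) := by
    constructor
    rw [Category.assoc, sq.w, ← Category.assoc, ← Category.assoc, e]
  obtain ⟨⟨l₀⟩⟩ := hlift.sq_hasLift sq0
  obtain ⟨w, hw1, hw2⟩ := l₀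
  -- agreement of `w` with `f` on simplices of the smaller horn missing `i`
  have agree : ∀ (M : SimplexCategoryᵒᵖ) (γ : Δ[m + 1].obj M)
      (hγ : γ ∈ (genHorn (m + 1) T).obj M) (hi' : i ∉ Set.range (asOrderHom γ)),
      w.app M (factorSimplex γ i) = f.app M ⟨γ, hγ⟩ := by
    intro M γ hγ hi'
    obtain ⟨t, ht, ht'⟩ := hγ
    have hti : t ≠ i := fun h => hiT (h ▸ ht)
    obtain ⟨s, hs⟩ := Fin.exists_succAbove_eq hti
    have hβ : factorSimplex γ i ∈ (genHorn m (i.succAbove ⁻¹' T)).obj M := by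
      refine ⟨s, by simpa [Set.mem_preimage, hs] using ht, ?_⟩
      rintro ⟨j, hj⟩
      apply ht'
      refine ⟨j, ?_⟩
      rw [← factorSimplex_spec' γ i hi' j, hj, hs]
    have h1 := types_congr_hom (NatTrans.congr_app hw1 M) ⟨factorSimplex γ i, hβ⟩
    have h2 : (ψmap i T).app M ⟨factorSimplex γ i, hβ⟩
        = (⟨γ, ⟨t, ht, ht'⟩⟩ : (genHorn (m + 1) T).toFunctor.obj M) :=
      Subtype.ext (factorSimplex_spec γ i hi')
    calc w.app M (factorSimplex γ i)
        = f.app M ((ψmap i T).app M ⟨factorSimplex γ i, hβ⟩) := h1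
      _ = f.app M ⟨γ, ⟨t, ht, ht'⟩⟩ := by rw [h2]
  have inT : ∀ {M : SimplexCategoryᵒᵖ} (α : Δ[m + 1].obj M),
      α ∈ (genHorn (m + 1) (insert i T)).obj M → i ∈ Set.range (asOrderHom α) →
      α ∈ (genHorn (m + 1) T).obj M := by
    rintro M α ⟨t, ht, ht'⟩ hi'
    rcases Set.mem_insert_iff.1 ht with rfl | h
    · exact absurd hi' ht'
    · exact ⟨t, h, ht'⟩
  classical
  refine ⟨⟨⟨{ app := fun M => ↾fun α =>
      if h : i ∈ Set.range (asOrderHom α.1) then f.app M ⟨α.1, inT α.1 α.2 h⟩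
      else w.app M (factorSimplex α.1 i), naturality := ?_ }, ?_, ?_⟩⟩⟩
  · intro M₁ M₂ g'
    ext α
    dsimp only [TypeCat.Fun.toFun_apply, types_comp_apply, TypeCat.ofHom_apply]
    split
    · rename_i h2
      split
      · rename_i h1
        exact (NatTrans.naturality_apply f g' ⟨α.1, inT α.1 α.2 h1⟩)
      · rename_i h1
        exact absurd (range_map_le g' α.1 h2) h1
    · rename_i h2
      split
      · rename_i h1
        exact (agree M₂ _ ((genHorn (m + 1) T).map g' (inT α.1 α.2 h1)) h2).trans
          ((NatTrans.naturality_apply f g' ⟨α.1, inT α.1 α.2 h1⟩))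
      · rename_i h1
        exact (congrArg (w.app M₂) (factorSimplex_map g' α.1 i h1)).trans
          (NatTrans.naturality_apply w g' (factorSimplex α.1 i))
  · ext M α
    show (if h : i ∈ Set.range (asOrderHom α.1) then _ else _) = f.app M α
    by_cases h : i ∈ Set.range (asOrderHom α.1)
    · rw [dif_pos h]
      rfl
    · rw [dif_neg h]
      exact agree M α.1 α.2 h
  · ext M α
    show p.app M (if h : i ∈ Set.range (asOrderHom α.1) then _ else _) = g.app M α
    by_cases h : i ∈ Set.range (asOrderHom α.1)
    · rw [dif_pos h]
      exact (types_congr_hom (NatTrans.congr_app sq.w M) ⟨α.1, inT α.1 α.2 h⟩).trans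
        (congrArg (g.app M) (Subtype.ext rfl))
    · rw [dif_neg h]
      exact (types_congr_hom (NatTrans.congr_app hw2 M) (factorSimplex α.1 i)).trans
        (congrArg (g.app M) (Subtype.ext (factorSimplex_spec α.1 i h)))

lemma key : ∀ (n k : ℕ) (T : Set (Fin (n + 1))), (Set.univ \ T).ncard ≤ k →
    0 ∈ T → Fin.last n ∈ T → T ≠ Set.univ →
    ∀ {S X : SSet.{u}} (p : S ⟶ X),
    (∀ (m : ℕ) (i : Fin (m + 1)), 0 < (i : ℕ) → (i : ℕ) < m →
      HasLiftingProperty (Λ[m, i].ι) p) →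
    HasLiftingProperty (genHorn n T).ι p := by
  intro n
  induction n using Nat.strong_induction_on with
  | _ n IHn =>
  intro k
  induction k with
  | zero =>
    intro T hcard h0 hlast hne S X p hp
    exfalso
    apply hne
    have hempty : Set.univ \ T = ∅ := (Set.ncard_eq_zero (Set.toFinite _)).1 (Nat.le_zero.1 hcard)
    exact Set.eq_univ_of_univ_subset (Set.diff_eq_empty.1 hempty)
  | succ k IHk =>
    intro T hcard h0 hlast hne S X p hp
    obtain ⟨i, hiT⟩ := (Set.ne_univ_iff_exists_notMem T).1 hne
    have hi0 : i ≠ 0 := fun h => hiT (h ▸ h0)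
    have hilast : i ≠ Fin.last n := fun h => hiT (h ▸ hlast)
    by_cases hT' : insert i T = Set.univ
    · have hTc : T = {i}ᶜ := by
        ext t
        constructor
        · intro ht h'
          exact hiT ((Set.mem_singleton_iff.1 h') ▸ ht)
        · intro ht
          have : t ∈ insert i T := hT' ▸ Set.mem_univ t
          rcases Set.mem_insert_iff.1 this with rfl | h
          · exact absurd rfl ht
          · exact h
      subst hTc
      exact horn_case i p (hp n i (Nat.pos_of_ne_zero (fun h => hi0 (Fin.ext h)))
        (lt_of_le_of_ne (Nat.lt_succ_iff.1 i.isLt) (fun h => hilast (Fin.ext h))))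
    · -- n ≥ 1
      rcases n with _ | m
      · exact absurd (Fin.fin_one_eq_zero i) hi0
      -- lifting property for the bigger horn, by inner induction
      have hliftT' : HasLiftingProperty (genHorn (m + 1) (insert i T)).ι p := by
        apply IHk (insert i T) _ (Set.mem_insert_of_mem _ h0)
          (Set.mem_insert_of_mem _ hlast) hT' p hp
        have hmem : i ∈ Set.univ \ T := ⟨Set.mem_univ i, hiT⟩
        have : Set.univ \ insert i T = (Set.univ \ T) \ {i} := by
          ext x
          simp only [Set.mem_diff, Set.mem_insert_iff, Set.mem_univ, true_and,
            Set.mem_singleton_iff, not_or]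
          tauto
        rw [this, Set.ncard_diff_singleton_of_mem hmem]
        omega
      -- lifting property for the small face horn, by outer induction
      have hT₀ : HasLiftingProperty (genHorn m (i.succAbove ⁻¹' T)).ι p := by
        apply IHn m (Nat.lt_succ_self m) (Set.univ \ (i.succAbove ⁻¹' T)).ncard
          _ le_rfl _ _ _ p hp
        · show i.succAbove 0 ∈ T
          rw [Fin.succAbove_of_castSucc_lt]
          · exact h0
          · simpa using Fin.pos_of_ne_zero hi0
        · show i.succAbove (Fin.last m) ∈ T
          rw [Fin.succAbove_of_le_castSucc, Fin.succ_last]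
          · exact hlast
          · rw [Fin.le_castSucc_iff, Fin.succ_last, Fin.lt_last_iff_ne_last]
            exact hilast
        · intro h
          apply hT'
          rw [Set.eq_univ_iff_forall]
          intro j
          by_cases hji : j = i
          · exact hji ▸ Set.mem_insert i T
          · obtain ⟨s, hs⟩ := Fin.exists_succAbove_eq hji
            have : s ∈ i.succAbove ⁻¹' T := h ▸ Set.mem_univ s
            exact Set.mem_insert_of_mem _ (by rwa [← hs])
      haveI := step i T hiT p hT₀
      haveI := hliftT'
      rw [← Subfunctor.homOfLe_ι (genHorn_mono (Set.subset_insert i T))]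
      infer_instance

end Stmt12Aux

/-- for every proper subset T of [n] containing 0 and n, the inclusion of
the generalized horn Lambda^n_T (the union of the faces d_t Delta^n, t in T) into
Delta^n is inner anodyne. -/
theorem stmt_12 (n : ℕ) (T : Set (Fin (n + 1))) (h0 : 0 ∈ T) (hn : Fin.last n ∈ T)
    (hT : T ≠ Set.univ) :
    InnerAnodyne (genHorn n T).ι := by
  intro S X p hp
  exact Stmt12Aux.key n (Set.univ \ T).ncard T le_rfl h0 hn hT p hp
end
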